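/- If G is a finite simple graph admitting a weak IASI, then the maximum number of vertices of G that are not mono-indexed, taken over all weak IASIs of G, equals the independence number α(G) of G. -/

import Mathlib

open Pointwise

/-- The induced set-label on unordered pairs: the sumset of the two vertex labels. -/
def edgeLabel {V : Type*} (f : V → Finset ℕ) : Sym2 V → Finset ℕ :=
  Sym2.lift ⟨fun u v => f u + f v, fun u v => add_comm (f u) (f v)⟩

/-- `f` is a weak integer additive set-indexer of `G`. -/
structure IsWeakIASI {V : Type*} (G : SimpleGraph V) (f : V → Finset ℕ) : Prop where
  nonempty : ∀ v, (f v).Nonempty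
  injective : Function.Injective f
  edgeInjective : Set.InjOn (edgeLabel f) G.edgeSet
  weak : ∀ u v, G.Adj u v → (edgeLabel f s(u, v)).card = max (f u).card (f v).card

/-- The number of mono-indexed edges of `G` under the labeling `f`. -/
noncomputable def monoEdgeCount {V : Type*} (G : SimpleGraph V) (f : V → Finset ℕ) : ℕ :=
  {e ∈ G.edgeSet | (edgeLabel f e).card = 1}.ncard

/-- The sparing number: the minimum number of mono-indexed edges over all weak IASIs. -/
noncomputable def sparingNumber {V : Type*} (G : SimpleGraph V) : ℕ :=
  sInf {n | ∃ f, IsWeakIASI G f ∧ monoEdgeCount G f = n}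

/-- The number of mono-indexed vertices under the labeling `f`. -/
noncomputable def monoVertexCount {V : Type*} (f : V → Finset ℕ) : ℕ :=
  {v | (f v).card = 1}.ncard

/-- `S` is a vertex cover of `G`: every edge has at least one end vertex in `S`. -/
def IsVertexCover {V : Type*} (G : SimpleGraph V) (S : Set V) : Prop :=
  ∀ ⦃u v⦄, G.Adj u v → u ∈ S ∨ v ∈ S

/-- The vertex covering number of `G`. -/
noncomputable def coverNumber {V : Type*} (G : SimpleGraph V) : ℕ :=
  sInf {n | ∃ S : Set V, IsVertexCover G S ∧ S.ncard = n}

/-- The independence number of `G`. -/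
noncomputable def indepNumber {V : Type*} (G : SimpleGraph V) : ℕ :=
  sSup {n | ∃ S : Set V, (∀ u ∈ S, ∀ v ∈ S, ¬ G.Adj u v) ∧ S.ncard = n}


lemma min'_sumset {s t : Finset ℕ} (hs : s.Nonempty) (ht : t.Nonempty) :
    (s+t).min' (hs.add ht) = s.min' hs + t.min' ht := by
  apply le_antisymm
  · exact Finset.min'_le _ _ (Finset.add_mem_add (Finset.min'_mem _ _) (Finset.min'_mem _ _))
  · apply Finset.le_min'
    intro y hy
    obtain ⟨a, ha, b, hb, rfl⟩ := Finset.mem_add.1 hy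
    exact add_le_add (Finset.min'_le _ _ ha) (Finset.min'_le _ _ hb)

lemma pow4_aux {i j k l : ℕ} (hij : i ≤ j) (hkl : k ≤ l) (hik : i ≤ k)
    (h : 4^i + 4^j = 4^k + 4^l) : i = k ∧ j = l := by
  have h4 : (0:ℕ) < 4 := by norm_num
  have e1 : 4^j = 4^i * 4^(j-i) := by rw [← pow_add]; congr 1; omega
  have e2 : 4^k = 4^i * 4^(k-i) := by rw [← pow_add]; congr 1; omega
  have e3 : 4^l = 4^i * 4^(l-i) := by rw [← pow_add]; congr 1; omega
  have hm : 1 + 4^(j-i) = 4^(k-i) + 4^(l-i) := by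
    have h' := h
    rw [e1, e2, e3] at h'
    have hpos : 0 < 4^i := pow_pos h4 i
    nlinarith [h']
  have hk : k = i := by
    by_contra hne
    have d1 : 4 ∣ 4^(k-i) := dvd_pow_self 4 (by omega)
    have d2 : 4 ∣ 4^(l-i) := dvd_pow_self 4 (by omega)
    have d3 : 4 ∣ 1 + 4^(j-i) := hm ▸ Nat.dvd_add d1 d2
    rcases Nat.eq_zero_or_pos (j - i) with h0 | h0
    · rw [h0] at d3; norm_num at d3
    · have : 4 ∣ 4^(j-i) := dvd_pow_self 4 (by omega)
      omega
  subst hk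
  have hjl : 4^j = 4^l := by omega
  exact ⟨rfl, Nat.pow_right_injective (by norm_num) hjl⟩

lemma pow4_sorted {i j k l : ℕ} (hij : i ≤ j) (hkl : k ≤ l)
    (h : 4^i + 4^j = 4^k + 4^l) : i = k ∧ j = l := by
  rcases le_total i k with hik | hki
  · exact pow4_aux hij hkl hik h
  · obtain ⟨h1, h2⟩ := pow4_aux hkl hij hki h.symm
    exact ⟨h1.symm, h2.symm⟩

lemma pow4_inj {i j k l : ℕ} (h : 4^i + 4^j = 4^k + 4^l) :
    (i = k ∧ j = l) ∨ (i = l ∧ j = k) := by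
  rcases le_total i j with hij | hji <;> rcases le_total k l with hkl | hlk
  · exact Or.inl (pow4_sorted hij hkl h)
  · exact Or.inr (pow4_sorted hij hlk (by omega))
  · obtain ⟨h1, h2⟩ := pow4_sorted hji hkl (by omega); exact Or.inr ⟨h2, h1⟩
  · obtain ⟨h1, h2⟩ := pow4_sorted hji hlk (by omega); exact Or.inl ⟨h2, h1⟩

lemma min'_congr {A B : Finset ℕ} (h : A = B) (hA : A.Nonempty) (hB : B.Nonempty) :
    A.min' hA = B.min' hB := by subst h; rfl

lemma construct {V : Type*} [Fintype V] (G : SimpleGraph V) (S : Set V)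
    (hS : ∀ u ∈ S, ∀ v ∈ S, ¬ G.Adj u v) :
    ∃ f : V → Finset ℕ, IsWeakIASI G f ∧ {v | (f v).card ≠ 1} = S := by
  classical
  set e := Fintype.equivFin V with he
  set idx : V → ℕ := fun v => (e v : ℕ) with hidx
  have idxinj : Function.Injective idx := fun a b h => e.injective (Fin.ext h)
  set f : V → Finset ℕ :=
    fun v => if v ∈ S then {4^(idx v), 2*4^(idx v)} else {4^(idx v)} with hf
  have hpos : ∀ v, 0 < 4^(idx v) := fun v => pow_pos (by norm_num) _
  have hne : ∀ v, (f v).Nonempty := by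
    intro v; by_cases h : v ∈ S <;> simp [hf, h]
  have hmin : ∀ v, (f v).min' (hne v) = 4^(idx v) := by
    intro v
    by_cases h : v ∈ S
    · apply le_antisymm
      · exact Finset.min'_le _ _ (by simp [hf, h])
      · apply Finset.le_min'
        intro y hy
        simp only [hf, if_pos h, Finset.mem_insert, Finset.mem_singleton] at hy
        rcases hy with rfl | rfl <;> omega
    · simp [hf, h]
  have p4 : ∀ {a b : V}, 4^(idx a) = 4^(idx b) → a = b := by
    intro a b h
    exact idxinj (Nat.pow_right_injective (by norm_num) h)
  have hcard : ∀ v, (f v).card = if v ∈ S then 2 else 1 := by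
    intro v
    by_cases h : v ∈ S
    · simp only [hf, if_pos h]
      rw [Finset.card_insert_of_notMem (by
        simp only [Finset.mem_singleton]; have := hpos v; omega)]
      simp
    · simp [hf, h]
  have hlabel : ∀ u v : V, edgeLabel f s(u, v) = f u + f v := fun _ _ => rfl
  have hminE : ∀ u v : V, (edgeLabel f s(u,v)).min' ((hne u).add (hne v)) =
      4^(idx u) + 4^(idx v) := by
    intro u v
    rw [show (edgeLabel f s(u,v)).min' ((hne u).add (hne v)) =
        (f u + f v).min' ((hne u).add (hne v)) from rfl,
      min'_sumset (hne u) (hne v), hmin, hmin]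
  refine ⟨f, ⟨hne, ?_, ?_, ?_⟩, ?_⟩
  · -- injective
    intro a b h
    apply p4
    rw [← hmin a, ← hmin b]
    exact min'_congr h _ _
  · -- edge injective
    intro e1 he1 e2 he2 hEq
    induction e1 using Sym2.ind with | _ a b => ?_
    induction e2 using Sym2.ind with | _ c d => ?_
    have hm : 4^(idx a) + 4^(idx b) = 4^(idx c) + 4^(idx d) := by
      rw [← hminE a b, ← hminE c d]
      exact min'_congr hEq _ _
    rw [Sym2.eq_iff]
    rcases pow4_inj hm with ⟨h1, h2⟩ | ⟨h1, h2⟩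
    · exact Or.inl ⟨idxinj h1, idxinj h2⟩
    · exact Or.inr ⟨idxinj h1, idxinj h2⟩
  · -- weak
    intro u v huv
    rw [hlabel, hcard, hcard]
    by_cases hu : u ∈ S <;> by_cases hv : v ∈ S
    · exact absurd huv (hS u hu v hv)
    · have hsum : f u + f v = {4^(idx u) + 4^(idx v), 2*4^(idx u) + 4^(idx v)} := by
        show (if u ∈ S then _ else _) + (if v ∈ S then _ else _) = _
        rw [if_pos hu, if_neg hv]
        ext z
        simp only [Finset.mem_add, Finset.mem_insert, Finset.mem_singleton]
        constructor
        · rintro ⟨a, (rfl | rfl), b, rfl, rfl⟩ <;> simp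
        · rintro (rfl | rfl)
          · exact ⟨_, Or.inl rfl, _, rfl, rfl⟩
          · exact ⟨_, Or.inr rfl, _, rfl, rfl⟩
      rw [hsum, if_pos hu, if_neg hv,
        Finset.card_insert_of_notMem (by
          simp only [Finset.mem_singleton]; have := hpos u; omega)]
      simp
    · have hsum : f u + f v = {4^(idx u) + 4^(idx v), 4^(idx u) + 2*4^(idx v)} := by
        show (if u ∈ S then _ else _) + (if v ∈ S then _ else _) = _
        rw [if_neg hu, if_pos hv]
        ext z
        simp only [Finset.mem_add, Finset.mem_insert, Finset.mem_singleton]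
        constructor
        · rintro ⟨a, rfl, b, (rfl | rfl), rfl⟩ <;> simp
        · rintro (rfl | rfl)
          · exact ⟨_, rfl, _, Or.inl rfl, rfl⟩
          · exact ⟨_, rfl, _, Or.inr rfl, rfl⟩
      rw [hsum, if_neg hu, if_pos hv,
        Finset.card_insert_of_notMem (by
          simp only [Finset.mem_singleton]; have := hpos v; omega)]
      simp
    · have h1 : f u = {4^(idx u)} := if_neg hu
      have h2 : f v = {4^(idx v)} := if_neg hv
      rw [h1, h2, if_neg hu, if_neg hv, Finset.singleton_add_singleton]
      simp
  · -- nonmono set = S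
    ext v
    simp only [Set.mem_setOf_eq, hcard v]
    by_cases h : v ∈ S <;> simp [h]

lemma nonMono_indep {V : Type*} (G : SimpleGraph V) (f : V → Finset ℕ)
    (h : IsWeakIASI G f) :
    ∀ u ∈ {v | (f v).card ≠ 1}, ∀ v ∈ {v | (f v).card ≠ 1}, ¬ G.Adj u v := by
  intro u hu v hv hadj
  have h1 : 0 < (f u).card := Finset.card_pos.2 (h.nonempty u)
  have h2 : 0 < (f v).card := Finset.card_pos.2 (h.nonempty v)
  have hCD := cauchy_davenport_add_of_linearOrder_isCancelAdd (h.nonempty u) (h.nonempty v)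
  have hw := h.weak u v hadj
  have hE : edgeLabel f s(u, v) = f u + f v := rfl
  rw [hE] at hw
  simp only [Set.mem_setOf_eq] at hu hv
  rcases max_choice (f u).card (f v).card with hm | hm <;> omega

/-- For a weak IASI graph `G`, the maximum number of vertices that are not mono-indexed,
taken over all weak IASIs of `G`, equals the independence number `α(G)`. -/
theorem max_nonMonoVertices_eq_indepNumber {V : Type*} [Fintype V] (G : SimpleGraph V)
    (hG : ∃ f, IsWeakIASI G f) :
    sSup {n | ∃ f, IsWeakIASI G f ∧ ({v | (f v).card ≠ 1} : Set V).ncard = n} =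
      indepNumber G := by
  classical
  have bound : ∀ T : Set V, T.ncard ≤ Fintype.card V := fun T => by
    rw [← Nat.card_eq_fintype_card, ← Set.ncard_univ]
    exact Set.ncard_le_ncard (Set.subset_univ _) Set.finite_univ
  have hb1 : BddAbove {n | ∃ f, IsWeakIASI G f ∧ ({v | (f v).card ≠ 1} : Set V).ncard = n} := by
    refine ⟨Fintype.card V, ?_⟩
    rintro n ⟨f, _, rfl⟩
    exact bound _
  have hb2 : BddAbove {n | ∃ S : Set V, (∀ u ∈ S, ∀ v ∈ S, ¬ G.Adj u v) ∧ S.ncard = n} := by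
    refine ⟨Fintype.card V, ?_⟩
    rintro n ⟨S, _, rfl⟩
    exact bound _
  have hne2 : {n | ∃ S : Set V, (∀ u ∈ S, ∀ v ∈ S, ¬ G.Adj u v) ∧ S.ncard = n}.Nonempty :=
    ⟨0, ∅, by simp, by simp⟩
  have hmem : indepNumber G ∈
      {n | ∃ S : Set V, (∀ u ∈ S, ∀ v ∈ S, ¬ G.Adj u v) ∧ S.ncard = n} :=
    Nat.sSup_mem hne2 hb2
  obtain ⟨S, hSindep, hScard⟩ := hmem
  obtain ⟨f0, hf0, hf0set⟩ := construct G S hSindep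
  apply le_antisymm
  · apply csSup_le
    · obtain ⟨f, hf⟩ := hG
      exact ⟨_, f, hf, rfl⟩
    · rintro n ⟨f, hf, rfl⟩
      exact le_csSup hb2 ⟨_, nonMono_indep G f hf, rfl⟩
  · exact le_csSup hb1 ⟨f0, hf0, by rw [hf0set, hScard]⟩
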